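/- Let T be a Euclidean minimum spanning tree on a finite planar point set V, let C be a cone with apex u of angle measure less than π/3, let uv be an edge of T contained in C, and let w ∈ V ∩ C with |uw| ≤ |uv| and w ≠ v. Then the graph obtained from T by deleting edge uv and adding edge uw is also a minimum spanning tree of V. -/

import Mathlib

open EuclideanGeometry Real Finset

/-- Total Euclidean length of the edges of a graph on a finite point set. -/
noncomputable def edgeWeight {V : Type*} [Fintype V]
    (p : V → EuclideanSpace ℝ (Fin 2)) (T : SimpleGraph V) : ℝ := by
  classical
  exact ∑ e ∈ T.edgeFinset,
    Sym2.lift ⟨fun a b => dist (p a) (p b), fun a b => by simp [dist_comm]⟩ e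

/-- `T` is a Euclidean minimum spanning tree of the point set `p '' V`. -/
def IsEMST {V : Type*} [Fintype V] (p : V → EuclideanSpace ℝ (Fin 2))
    (T : SimpleGraph V) : Prop :=
  T.Connected ∧ T.IsAcyclic ∧
    ∀ T' : SimpleGraph V, T'.Connected → T'.IsAcyclic → edgeWeight p T ≤ edgeWeight p T'

/-- `edgeWeight` with an arbitrary `Fintype` instance on the edge set. -/
lemma edgeWeight_def {V : Type*} [Fintype V] (p : V → EuclideanSpace ℝ (Fin 2))
    (T : SimpleGraph V) [Fintype T.edgeSet] :
    edgeWeight p T = ∑ e ∈ T.edgeFinset,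
      Sym2.lift ⟨fun a b => dist (p a) (p b), fun a b => by simp [dist_comm]⟩ e := by
  unfold edgeWeight
  refine Finset.sum_congr ?_ fun _ _ => rfl
  ext e
  simp [SimpleGraph.mem_edgeFinset]

/-- A walk in `G` either survives in `G` minus the edge `uv`, or connects its endpoints
to `u` and `v` in `G` minus `uv`. -/
lemma walk_cases {V : Type*} (G : SimpleGraph V) (u v : V) {z t : V} (W : G.Walk z t) :
    (G.deleteEdges {s(u, v)}).Reachable z t ∨
    ((G.deleteEdges {s(u, v)}).Reachable z u ∧ (G.deleteEdges {s(u, v)}).Reachable t v) ∨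
    ((G.deleteEdges {s(u, v)}).Reachable z v ∧ (G.deleteEdges {s(u, v)}).Reachable t u) := by
  induction W with
  | nil => exact Or.inl (SimpleGraph.Reachable.refl _)
  | @cons z x t hzx W ih =>
    by_cases he : s(z, x) = s(u, v)
    · rw [Sym2.eq_iff] at he
      rcases he with ⟨rfl, rfl⟩ | ⟨rfl, rfl⟩
      · rcases ih with h | ⟨h1, h2⟩ | ⟨h1, h2⟩
        · exact Or.inr (Or.inl ⟨SimpleGraph.Reachable.refl _, h.symm⟩)
        · exact Or.inr (Or.inl ⟨SimpleGraph.Reachable.refl _, h2⟩)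
        · exact Or.inl h2.symm
      · rcases ih with h | ⟨h1, h2⟩ | ⟨h1, h2⟩
        · exact Or.inr (Or.inr ⟨SimpleGraph.Reachable.refl _, h.symm⟩)
        · exact Or.inl h2.symm
        · exact Or.inr (Or.inr ⟨SimpleGraph.Reachable.refl _, h2⟩)
    · have hadj : (G.deleteEdges {s(u, v)}).Adj z x := by
        rw [SimpleGraph.deleteEdges_adj]
        exact ⟨hzx, by simpa using he⟩
      rcases ih with h | ⟨h1, h2⟩ | ⟨h1, h2⟩
      · exact Or.inl (hadj.reachable.trans h)
      · exact Or.inr (Or.inl ⟨hadj.reachable.trans h1, h2⟩)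
      · exact Or.inr (Or.inr ⟨hadj.reachable.trans h1, h2⟩)

/-- After deleting the edge `uv`, every vertex reachable to `u` is still reachable
to `u` or to `v`. -/
lemma reach_or_aux {V : Type*} (G : SimpleGraph V) (u v z : V) (h : G.Reachable z u) :
    (G.deleteEdges {s(u, v)}).Reachable z u ∨ (G.deleteEdges {s(u, v)}).Reachable z v := by
  obtain ⟨W⟩ := h
  rcases walk_cases G u v W with h | ⟨h1, _⟩ | ⟨h1, _⟩
  · exact Or.inl h
  · exact Or.inl h1
  · exact Or.inr h1

/-- Swapping an edge of a tree for an edge crossing the cut it induces gives a tree. -/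
lemma swap_spec {V : Type*} (T : SimpleGraph V) (hc : T.Connected) (ha : T.IsAcyclic)
    (u v a b : V) (huv : T.Adj u v) (hab : a ≠ b) (hne : s(a, b) ≠ s(u, v))
    (hra : (T.deleteEdges {s(u, v)}).Reachable u a)
    (hrb : (T.deleteEdges {s(u, v)}).Reachable v b) :
    (SimpleGraph.fromEdgeSet ((T.edgeSet \ {s(u, v)}) ∪ {s(a, b)})).Connected ∧
    (SimpleGraph.fromEdgeSet ((T.edgeSet \ {s(u, v)}) ∪ {s(a, b)})).IsAcyclic ∧
    s(a, b) ∉ T.edgeSet := by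
  classical
  set G := T.deleteEdges {s(u, v)} with hG
  set T' := SimpleGraph.fromEdgeSet ((T.edgeSet \ {s(u, v)}) ∪ {s(a, b)}) with hT'
  have hbridge : ¬ G.Reachable u v := by
    have := (SimpleGraph.isAcyclic_iff_forall_adj_isBridge.mp ha) huv
    rw [SimpleGraph.isBridge_iff] at this
    exact this
  have hnreach : ¬ G.Reachable a b := fun h =>
    hbridge (hra.trans (h.trans hrb.symm))
  have habT : s(a, b) ∉ T.edgeSet := by
    intro hmem
    have : G.Adj a b := by
      rw [hG, SimpleGraph.deleteEdges_adj]
      exact ⟨T.mem_edgeSet.mp hmem, by simpa using hne⟩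
    exact hnreach this.reachable
  have hGle : G ≤ T' := by
    rw [hT', ← SimpleGraph.fromEdgeSet_edgeSet G]
    apply SimpleGraph.fromEdgeSet_mono
    rw [hG, SimpleGraph.edgeSet_deleteEdges]
    exact Set.subset_union_left
  have hadjab : T'.Adj a b := by
    rw [hT', SimpleGraph.fromEdgeSet_adj]
    exact ⟨Or.inr rfl, hab⟩
  -- connectivity
  have hreach_u : ∀ z : V, T'.Reachable z u := by
    intro z
    rcases reach_or_aux T u v z (hc.preconnected z u) with h | h
    · exact h.mono hGle
    · have h1 : T'.Reachable z b := (h.trans hrb).mono hGle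
      have h2 : T'.Reachable a u := (hra.mono hGle).symm
      exact (h1.trans hadjab.symm.reachable).trans h2
  have hconn : T'.Connected := by
    have : Nonempty V := hc.nonempty
    exact SimpleGraph.Connected.mk fun x y => (hreach_u x).trans (hreach_u y).symm
  -- acyclicity
  have hacy : T'.IsAcyclic := by
    intro x c hcyc
    by_cases hmem : s(a, b) ∈ c.edges
    · have hkey : T'.Adj a b ∧ (T' \ SimpleGraph.fromEdgeSet {s(a, b)}).Reachable a b :=
        SimpleGraph.adj_and_reachable_delete_edges_iff_exists_cycle.mpr ⟨x, c, hcyc, hmem⟩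
      have hle2 : (T' \ SimpleGraph.fromEdgeSet {s(a, b)}) ≤ G := by
        intro x' y' hadj
        rw [SimpleGraph.sdiff_adj] at hadj
        obtain ⟨hadj1, hadj2⟩ := hadj
        rw [hT', SimpleGraph.fromEdgeSet_adj] at hadj1
        obtain ⟨hmem', hne'⟩ := hadj1
        have hnab : s(x', y') ≠ s(a, b) := by
          intro h
          exact hadj2 (by rw [SimpleGraph.fromEdgeSet_adj]
                          exact ⟨Set.mem_singleton_iff.mpr h, hne'⟩)
        rcases hmem' with ⟨h1, h2⟩ | h1
        · rw [hG, SimpleGraph.deleteEdges_adj]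
          exact ⟨T.mem_edgeSet.mp h1, by simpa using h2⟩
        · exact absurd (Set.mem_singleton_iff.mp h1) hnab
      exact hnreach (hkey.2.mono hle2)
    · -- transfer the cycle to T
      have hedges : ∀ e ∈ c.edges, e ∈ T.edgeSet := by
        intro e he
        have h1 : e ∈ T'.edgeSet := c.edges_subset_edgeSet he
        rw [hT', SimpleGraph.edgeSet_fromEdgeSet] at h1
        rcases h1.1 with h' | h'
        · exact h'.1
        · exact absurd (Set.mem_singleton_iff.mp h' ▸ he) hmem
      exact ha (c.transfer T hedges) (hcyc.transfer hedges)
  exact ⟨hconn, hacy, habT⟩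

lemma edgeWeight_swap {V : Type*} [Fintype V] (p : V → EuclideanSpace ℝ (Fin 2))
    (T : SimpleGraph V) (x y a b : V) (hxy : s(x, y) ∈ T.edgeSet) (hab : a ≠ b)
    (habT : s(a, b) ∉ T.edgeSet) :
    edgeWeight p (SimpleGraph.fromEdgeSet ((T.edgeSet \ {s(x, y)}) ∪ {s(a, b)})) =
      edgeWeight p T - dist (p x) (p y) + dist (p a) (p b) := by
  classical
  set f : Sym2 V → ℝ :=
    Sym2.lift ⟨fun a b => dist (p a) (p b), fun a b => by simp [dist_comm]⟩ with hf
  set T' := SimpleGraph.fromEdgeSet ((T.edgeSet \ {s(x, y)}) ∪ {s(a, b)}) with hT'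
  have hES : T'.edgeSet = (T.edgeSet \ {s(x, y)}) ∪ {s(a, b)} := by
    rw [hT', SimpleGraph.edgeSet_fromEdgeSet]
    ext e
    simp only [Set.mem_diff, Set.mem_union, Set.mem_setOf_eq, Set.mem_singleton_iff]
    constructor
    · rintro ⟨h, -⟩; exact h
    · intro h
      refine ⟨h, ?_⟩
      rcases h with ⟨h1, -⟩ | h1
      · exact SimpleGraph.not_isDiag_of_mem_edgeSet T h1
      · subst h1
        simpa [Sym2.mk_isDiag_iff] using hab
  have hEF : T'.edgeFinset = T.edgeFinset.erase s(x, y) ∪ {s(a, b)} := by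
    rw [← Finset.coe_inj]
    simp [hES, Finset.coe_erase, Set.union_comm, SimpleGraph.coe_edgeFinset]
  rw [edgeWeight_def, edgeWeight_def, hEF]
  rw [Finset.sum_union (by
    simp only [Finset.disjoint_singleton_right, Finset.mem_erase]
    rw [SimpleGraph.mem_edgeFinset]
    exact fun h => habT h.2)]
  rw [Finset.sum_erase_eq_sub (by rwa [SimpleGraph.mem_edgeFinset])]
  simp [hf]

lemma dist_lt_of_angle_lt (x y z : EuclideanSpace ℝ (Fin 2)) (hxy : x ≠ y) (hxz : x ≠ z)
    (hangle : ∠ y x z < π / 3) (hlen : dist x z ≤ dist x y) : dist y z < dist x y := by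
  have hlaw := EuclideanGeometry.law_cos y x z
  have hA : 0 < dist y x := dist_pos.mpr (fun h => hxy h.symm)
  have hB : 0 < dist z x := dist_pos.mpr (fun h => hxz h.symm)
  have h0 : 0 ≤ ∠ y x z := EuclideanGeometry.angle_nonneg _ _ _
  have hπ : ∠ y x z ≤ π := EuclideanGeometry.angle_le_pi _ _ _
  have hcos : (1 : ℝ) / 2 < Real.cos (∠ y x z) := by
    have := Real.strictAntiOn_cos (Set.mem_Icc.mpr ⟨h0, hπ⟩)
      (Set.mem_Icc.mpr ⟨by positivity, by linarith [Real.pi_pos]⟩) hangle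
    rwa [Real.cos_pi_div_three] at this
  have hA' : dist y x = dist x y := dist_comm _ _
  have hB' : dist z x = dist x z := dist_comm _ _
  have hsq : dist y z * dist y z < dist x y * dist x y := by
    nlinarith [hlaw, hlen, hcos, hA, hB, hA', hB', mul_pos hA hB]
  have hsq' : dist y z ^ 2 < dist x y ^ 2 := by
    rw [pow_two, pow_two]; exact hsq
  exact lt_of_pow_lt_pow_left₀ 2 dist_nonneg hsq'

/-- If `uv` is an MST edge lying in a cone of apex `u` with angle measure `< π/3`
(so any two points in the cone subtend an angle `< π/3` at `u`), and `w` is another point of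
the cone with `|uw| ≤ |uv|`, then replacing `uv` by `uw` yields another minimum spanning
tree. -/
theorem mst_swap {V : Type*} [Fintype V]
    (p : V → EuclideanSpace ℝ (Fin 2)) (hp : Function.Injective p)
    (T : SimpleGraph V) (hT : IsEMST p T)
    (u v w : V) (huv : T.Adj u v) (hwv : w ≠ v) (hwu : w ≠ u)
    (hcone : ∠ (p v) (p u) (p w) < π / 3)
    (hlen : dist (p u) (p w) ≤ dist (p u) (p v)) :
    IsEMST p (SimpleGraph.fromEdgeSet ((T.edgeSet \ {s(u, v)}) ∪ {s(u, w)})) := by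
  classical
  obtain ⟨hcT, haT, hmin⟩ := hT
  have hpu_pv : p u ≠ p v := fun h => huv.ne (hp h)
  have hpu_pw : p u ≠ p w := fun h => hwu (hp h.symm)
  have hdvw : dist (p v) (p w) < dist (p u) (p v) :=
    dist_lt_of_angle_lt (p u) (p v) (p w) hpu_pv hpu_pw hcone hlen
  rcases reach_or_aux T u v w (hcT.preconnected w u) with h1 | h2
  · -- w is on u's side: contradiction via swapping uv for wv
    exfalso
    have hne : s(w, v) ≠ s(u, v) := by
      intro h
      rw [Sym2.eq_iff] at h
      rcases h with ⟨h', -⟩ | ⟨h', -⟩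
      · exact hwu h'
      · exact hwv h'
    obtain ⟨hconn, hacy, habT⟩ := swap_spec T hcT haT u v w v huv hwv hne h1.symm
      (SimpleGraph.Reachable.refl _)
    have hwt := edgeWeight_swap p T u v w v (T.mem_edgeSet.mpr huv) hwv habT
    have hle := hmin _ hconn hacy
    rw [hwt] at hle
    have hcomm : dist (p w) (p v) = dist (p v) (p w) := dist_comm _ _
    linarith
  · -- w is on v's side: the swap gives another MST
    have hne : s(u, w) ≠ s(u, v) := by
      intro h
      rw [Sym2.eq_iff] at h
      rcases h with ⟨-, h'⟩ | ⟨h', -⟩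
      · exact hwv h'
      · exact huv.ne h'
    obtain ⟨hconn, hacy, habT⟩ := swap_spec T hcT haT u v u w huv (Ne.symm hwu) hne
      (SimpleGraph.Reachable.refl _) h2.symm
    have hwt := edgeWeight_swap p T u v u w (T.mem_edgeSet.mpr huv)
      (Ne.symm hwu) habT
    refine ⟨hconn, hacy, fun T2 hc2 ha2 => ?_⟩
    have hle := hmin _ hconn hacy
    have hle2 := hmin T2 hc2 ha2
    rw [hwt] at hle ⊢
    linarith
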